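/- Fix a threshold L = k ln n. Every set B of disjoint 'breaks' (intervals in [n]) each of length at least L and with total length in [i·L, (i+1)·L) can be injectively mapped to at most i contiguous subintervals of [n], each either empty or with length in [L, 2L). Consequently, the number of such break configurations is at most (n·L + 1)^i. -/

import Mathlib

open Finset


def bcPieces (L : ℕ) (b : ℕ × ℕ) : Multiset (ℕ × ℕ) :=
  (b.1, L + b.2 % L) ::ₘ Multiset.replicate (b.2 / L - 1) (b.1, L)

def bcEnc (L : ℕ) (B : Finset (ℕ × ℕ)) : Multiset (ℕ × ℕ) := ∑ b ∈ B, bcPieces L b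

def bcTot (a : ℕ) (M : Multiset (ℕ × ℕ)) : ℕ :=
  ((M.filter fun p => p.1 = a).map Prod.snd).sum

lemma bc_mem_pieces {L : ℕ} {b p : ℕ × ℕ} (hp : p ∈ bcPieces L b) :
    p.1 = b.1 ∧ (p.2 = L + b.2 % L ∨ p.2 = L) := by
  rcases Multiset.mem_cons.mp hp with h | h
  · simp [h]
  · have := Multiset.eq_of_mem_replicate h
    simp [this]

lemma bc_tot_pieces {L : ℕ} (hL : 1 ≤ L) {b : ℕ × ℕ} (hb : L ≤ b.2) (a : ℕ) :
    bcTot a (bcPieces L b) = if b.1 = a then b.2 else 0 := by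
  have hq : 1 ≤ b.2 / L := (Nat.one_le_div_iff hL).mpr hb
  have hdm : L * (b.2 / L) + b.2 % L = b.2 := Nat.div_add_mod b.2 L
  by_cases h : b.1 = a
  · simp only [bcTot, bcPieces, if_pos h]
    rw [Multiset.filter_cons_of_pos _ (by simpa using h),
        Multiset.filter_eq_self.mpr
          (fun x hx => by rw [Multiset.eq_of_mem_replicate hx]; exact h)]
    simp only [Multiset.map_cons, Multiset.map_replicate, Multiset.sum_cons,
      Multiset.sum_replicate, smul_eq_mul]
    have h2 : (b.2 / L - 1) * L = (b.2 / L) * L - 1 * L := Nat.sub_mul _ _ _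
    have h3 : L * (b.2 / L) = (b.2 / L) * L := Nat.mul_comm _ _
    have h4 : 1 * L ≤ (b.2 / L) * L := Nat.mul_le_mul_right L hq
    omega
  · simp only [bcTot, bcPieces, if_neg h]
    rw [Multiset.filter_cons_of_neg _ (by simpa using h),
        Multiset.filter_eq_nil.mpr
          (fun x hx => by rw [Multiset.eq_of_mem_replicate hx]; simpa using h)]
    simp

lemma bc_card_pieces {L : ℕ} (hL : 1 ≤ L) {b : ℕ × ℕ} (hb : L ≤ b.2) :
    Multiset.card (bcPieces L b) = b.2 / L := by
  have hq : 1 ≤ b.2 / L := (Nat.one_le_div_iff hL).mpr hb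
  simp [bcPieces]
  omega

lemma bc_tot_add (a : ℕ) (M N : Multiset (ℕ × ℕ)) :
    bcTot a (M + N) = bcTot a M + bcTot a N := by
  simp [bcTot, Multiset.filter_add]

lemma bc_tot_enc_sum (a L : ℕ) (s : Finset (ℕ × ℕ)) :
    bcTot a (∑ b ∈ s, bcPieces L b) = ∑ b ∈ s, bcTot a (bcPieces L b) := by
  induction s using Finset.cons_induction with
  | empty => simp [bcTot]
  | cons c t hc ih => rw [Finset.sum_cons, Finset.sum_cons, bc_tot_add, ih]

lemma bc_tot_enc {L : ℕ} (hL : 1 ≤ L) {B : Finset (ℕ × ℕ)}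
    (hlen : ∀ b ∈ B, L ≤ b.2)
    (hfst : ∀ b ∈ B, ∀ b' ∈ B, b.1 = b'.1 → b = b')
    {b : ℕ × ℕ} (hb : b ∈ B) :
    bcTot b.1 (bcEnc L B) = b.2 := by
  rw [bcEnc, bc_tot_enc_sum]
  rw [Finset.sum_eq_single_of_mem b hb]
  · rw [bc_tot_pieces hL (hlen b hb)]; simp
  · intro b' hb' hne
    rw [bc_tot_pieces hL (hlen b' hb')]
    have : ¬ b'.1 = b.1 := fun h => hne (hfst b' hb' b hb h)
    simp [this]

lemma bc_tot_ne_zero {L : ℕ} (hL : 1 ≤ L) {B : Finset (ℕ × ℕ)}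
    (hlen : ∀ b ∈ B, L ≤ b.2) {a : ℕ}
    (h : bcTot a (bcEnc L B) ≠ 0) : ∃ b ∈ B, b.1 = a := by
  by_contra hc
  push_neg at hc
  apply h
  rw [bcEnc, bc_tot_enc_sum]
  apply Finset.sum_eq_zero
  intro b hb
  rw [bc_tot_pieces hL (hlen b hb)]
  simp [hc b hb]

lemma bc_enc_inj {L : ℕ} (hL : 1 ≤ L) {B B' : Finset (ℕ × ℕ)}
    (hlen : ∀ b ∈ B, L ≤ b.2) (hlen' : ∀ b ∈ B', L ≤ b.2)
    (hfst : ∀ b ∈ B, ∀ b' ∈ B, b.1 = b'.1 → b = b')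
    (hfst' : ∀ b ∈ B', ∀ b' ∈ B', b.1 = b'.1 → b = b')
    (h : bcEnc L B = bcEnc L B') : B = B' := by
  have key : ∀ (C C' : Finset (ℕ × ℕ)), (∀ b ∈ C, L ≤ b.2) → (∀ b ∈ C', L ≤ b.2) →
      (∀ b ∈ C, ∀ b' ∈ C, b.1 = b'.1 → b = b') →
      (∀ b ∈ C', ∀ b' ∈ C', b.1 = b'.1 → b = b') →
      bcEnc L C = bcEnc L C' → ∀ b ∈ C, b ∈ C' := by
    intro C C' hl hl' hf hf' hE b hb
    have h1 : bcTot b.1 (bcEnc L C) = b.2 := bc_tot_enc hL hl hf hb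
    have h2 : bcTot b.1 (bcEnc L C') ≠ 0 := by
      rw [← hE, h1]; have := hl b hb; omega
    obtain ⟨b', hb', hfeq⟩ := bc_tot_ne_zero hL hl' h2
    have h3 : bcTot b'.1 (bcEnc L C') = b'.2 := bc_tot_enc hL hl' hf' hb'
    rw [hfeq, ← hE, h1] at h3
    have : b = b' := Prod.ext hfeq.symm h3
    rwa [this]
  apply Finset.Subset.antisymm
  · intro b hb; exact key B B' hlen hlen' hfst hfst' h b hb
  · intro b hb; exact key B' B hlen' hlen hfst' hfst h.symm b hb

lemma bc_piece_valid {n L : ℕ} (hL : 1 ≤ L) {b p : ℕ × ℕ}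
    (hb1 : L ≤ b.2) (hb2 : 1 ≤ b.1) (hb3 : b.1 + b.2 - 1 ≤ n)
    (hp : p ∈ bcPieces L b) :
    L ≤ p.2 ∧ p.2 < 2 * L ∧ 1 ≤ p.1 ∧ p.1 + p.2 - 1 ≤ n := by
  obtain ⟨h1, h2⟩ := bc_mem_pieces hp
  have hq : 1 ≤ b.2 / L := (Nat.one_le_div_iff hL).mpr hb1
  have hdm : L * (b.2 / L) + b.2 % L = b.2 := Nat.div_add_mod b.2 L
  have hr : b.2 % L < L := Nat.mod_lt _ hL
  have hLq : 1 * L ≤ (b.2 / L) * L := Nat.mul_le_mul_right L hq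
  have hcm : L * (b.2 / L) = (b.2 / L) * L := Nat.mul_comm _ _
  have hple : p.2 ≤ b.2 := by rcases h2 with h | h <;> omega
  refine ⟨?_, ?_, ?_, ?_⟩ <;> rcases h2 with h | h <;> omega

lemma bc_sum_div_le (L : ℕ) (s : Finset (ℕ × ℕ)) :
    ∑ b ∈ s, b.2 / L ≤ (∑ b ∈ s, b.2) / L := by
  induction s using Finset.cons_induction with
  | empty => simp
  | cons c t hc ih =>
    rw [Finset.sum_cons, Finset.sum_cons]
    calc c.2 / L + ∑ b ∈ t, b.2 / L ≤ c.2 / L + (∑ b ∈ t, b.2) / L :=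
          Nat.add_le_add_left ih _
      _ ≤ (c.2 + ∑ b ∈ t, b.2) / L := Nat.add_div_le_add_div _ _ _

lemma bc_card_enc {L i : ℕ} (hL : 1 ≤ L) {B : Finset (ℕ × ℕ)}
    (hlen : ∀ b ∈ B, L ≤ b.2) (htot : ∑ b ∈ B, b.2 < (i + 1) * L) :
    Multiset.card (bcEnc L B) ≤ i := by
  have hgen : ∀ s : Finset (ℕ × ℕ),
      Multiset.card (∑ b ∈ s, bcPieces L b) = ∑ b ∈ s, Multiset.card (bcPieces L b) := by
    intro s
    induction s using Finset.cons_induction with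
    | empty => simp
    | cons c t hc ih => rw [Finset.sum_cons, Finset.sum_cons, Multiset.card_add, ih]
  have h1 : Multiset.card (bcEnc L B) = ∑ b ∈ B, Multiset.card (bcPieces L b) := hgen B
  rw [h1]
  have h2 : ∑ b ∈ B, Multiset.card (bcPieces L b) = ∑ b ∈ B, b.2 / L :=
    Finset.sum_congr rfl fun b hb => bc_card_pieces hL (hlen b hb)
  rw [h2]
  have h3 := bc_sum_div_le L B
  have h4 : (∑ b ∈ B, b.2) / L < i + 1 := (Nat.div_lt_iff_lt_mul hL).mpr htot
  omega

noncomputable def bcList (L : ℕ) (B : Finset (ℕ × ℕ)) : List ℕ :=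
  ((bcEnc L B).map Nat.pairEquiv).sort (· ≤ ·)

noncomputable def bcFun (L i : ℕ) (B : Finset (ℕ × ℕ)) : Fin i → ℕ × ℕ :=
  fun j => if h : (j : ℕ) < (bcList L B).length
    then Nat.pairEquiv.symm ((bcList L B).get ⟨j, h⟩) else (0, 0)

lemma bc_list_mem {L : ℕ} {B : Finset (ℕ × ℕ)} {x : ℕ} (hx : x ∈ bcList L B) :
    ∃ p ∈ bcEnc L B, Nat.pairEquiv.symm x = p := by
  rw [bcList, Multiset.mem_sort, Multiset.mem_map] at hx
  obtain ⟨p, hp, hpe⟩ := hx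
  exact ⟨p, hp, by rw [← hpe, Equiv.symm_apply_apply]⟩

lemma bc_list_length {L : ℕ} (B : Finset (ℕ × ℕ)) :
    (bcList L B).length = Multiset.card (bcEnc L B) := by
  rw [bcList, Multiset.length_sort, Multiset.card_map]

lemma bc_mem_enc {L : ℕ} {B : Finset (ℕ × ℕ)} {p : ℕ × ℕ} (hp : p ∈ bcEnc L B) :
    ∃ b ∈ B, p ∈ bcPieces L b := Multiset.mem_sum.mp hp

lemma bc_list_snd_pos {L : ℕ} (hL : 1 ≤ L) {B : Finset (ℕ × ℕ)}
    {x : ℕ} (hx : x ∈ bcList L B) : 1 ≤ (Nat.pairEquiv.symm x).2 := by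
  obtain ⟨p, hp, hpe⟩ := bc_list_mem hx
  obtain ⟨b, _, hpb⟩ := bc_mem_enc hp
  obtain ⟨-, h2⟩ := bc_mem_pieces hpb
  rw [hpe]
  rcases h2 with h | h <;> omega

lemma bc_fun_inj {L i : ℕ} (hL : 1 ≤ L) {B B' : Finset (ℕ × ℕ)}
    (hc : Multiset.card (bcEnc L B) ≤ i) (hc' : Multiset.card (bcEnc L B') ≤ i)
    (h : bcFun L i B = bcFun L i B') : bcEnc L B = bcEnc L B' := by
  have hlB := bc_list_length (L := L) B
  have hlB' := bc_list_length (L := L) B'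
  -- lengths are equal
  have hle : ∀ (C C' : Finset (ℕ × ℕ)), (bcList L C).length ≤ i →
      (bcList L C').length ≤ i → bcFun L i C = bcFun L i C' →
      (bcList L C).length ≤ (bcList L C').length := by
    intro C C' h1 h2 hf
    by_contra hlt
    push_neg at hlt
    set j : Fin i := ⟨(bcList L C').length, lt_of_lt_of_le hlt h1⟩ with hj
    have e1 : bcFun L i C j = Nat.pairEquiv.symm
        ((bcList L C).get ⟨(bcList L C').length, hlt⟩) := by
      rw [bcFun]; exact dif_pos hlt
    have e2 : bcFun L i C' j = (0, 0) := by
      rw [bcFun]; exact dif_neg (by simp [hj])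
    have := bc_list_snd_pos hL (List.get_mem (bcList L C) ⟨_, hlt⟩)
    rw [← e1, hf, e2] at this
    simp at this
  have hlen : (bcList L B).length = (bcList L B').length :=
    le_antisymm (hle B B' (by omega) (by omega) h)
      (hle B' B (by omega) (by omega) h.symm)
  have hget : ∀ (j : ℕ) (hj : j < (bcList L B).length) (hj' : j < (bcList L B').length),
      (bcList L B).get ⟨j, hj⟩ = (bcList L B').get ⟨j, hj'⟩ := by
    intro j hj hj'
    have hji : j < i := lt_of_lt_of_le hj (by omega)
    have e1 : bcFun L i B ⟨j, hji⟩ = Nat.pairEquiv.symm ((bcList L B).get ⟨j, hj⟩) :=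
      dif_pos hj
    have e2 : bcFun L i B' ⟨j, hji⟩ = Nat.pairEquiv.symm ((bcList L B').get ⟨j, hj'⟩) :=
      dif_pos hj'
    have : Nat.pairEquiv.symm ((bcList L B).get ⟨j, hj⟩)
        = Nat.pairEquiv.symm ((bcList L B').get ⟨j, hj'⟩) := by rw [← e1, h, e2]
    exact Nat.pairEquiv.symm.injective this
  have hlist : bcList L B = bcList L B' :=
    List.ext_get hlen (fun j hj hj' => hget j hj hj')
  have hmul : (bcEnc L B).map Nat.pairEquiv = (bcEnc L B').map Nat.pairEquiv := by
    have := congrArg (fun l : List ℕ => (l : Multiset ℕ)) hlist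
    simpa [bcList, Multiset.sort_eq] using this
  exact Multiset.map_injective Nat.pairEquiv.injective hmul

lemma bc_hfst {n L : ℕ} (hL : 1 ≤ L) {B : Finset (ℕ × ℕ)}
    (h1 : ∀ b ∈ B, L ≤ b.2 ∧ 1 ≤ b.1 ∧ b.1 + b.2 - 1 ≤ n)
    (h2 : (B : Set (ℕ × ℕ)).Pairwise
      (fun b b' => Disjoint (Finset.Ico b.1 (b.1 + b.2)) (Finset.Ico b'.1 (b'.1 + b'.2)))) :
    ∀ b ∈ B, ∀ b' ∈ B, b.1 = b'.1 → b = b' := by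
  intro b hb b' hb' he
  by_contra hne
  have hd := h2 (Finset.mem_coe.mpr hb) (Finset.mem_coe.mpr hb') hne
  have m1 : b.1 ∈ Finset.Ico b.1 (b.1 + b.2) := by
    have := (h1 b hb).1; rw [Finset.mem_Ico]; omega
  have m2 : b.1 ∈ Finset.Ico b'.1 (b'.1 + b'.2) := by
    have := (h1 b' hb').1; rw [Finset.mem_Ico]; omega
  exact Finset.disjoint_left.mp hd m1 m2

/-- **Counting break configurations.** Fix a threshold `L` (`= k ln n` in the
paper) with `L ≥ 1`. Consider sets `B` of disjoint "breaks": intervals within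
`[1, n]`, each of length at least `L`, with total length in `[i·L, (i+1)·L)`.
(An interval is recorded as a pair `(start, length)` with length positive,
representing `{start, …, start + length − 1}`.)

Every such configuration can be injectively mapped to a function giving `i` (or
fewer) contiguous subintervals of `[1, n]`, each either empty or of a length in
`[L, 2L)`; consequently the number of such configurations is at most
`(n·L + 1)^i`. -/
theorem break_configuration_count (n L i : ℕ) (hL : 1 ≤ L) :
    (∃ f : Finset (ℕ × ℕ) → (Fin i → ℕ × ℕ),
        Set.InjOn f {B : Finset (ℕ × ℕ) |
            (∀ b ∈ B, L ≤ b.2 ∧ 1 ≤ b.1 ∧ b.1 + b.2 - 1 ≤ n) ∧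
            (B : Set (ℕ × ℕ)).Pairwise
              (fun b b' => Disjoint (Finset.Ico b.1 (b.1 + b.2)) (Finset.Ico b'.1 (b'.1 + b'.2))) ∧
            i * L ≤ ∑ b ∈ B, b.2 ∧ ∑ b ∈ B, b.2 < (i + 1) * L} ∧
        ∀ B ∈ {B : Finset (ℕ × ℕ) |
            (∀ b ∈ B, L ≤ b.2 ∧ 1 ≤ b.1 ∧ b.1 + b.2 - 1 ≤ n) ∧
            (B : Set (ℕ × ℕ)).Pairwise
              (fun b b' => Disjoint (Finset.Ico b.1 (b.1 + b.2)) (Finset.Ico b'.1 (b'.1 + b'.2))) ∧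
            i * L ≤ ∑ b ∈ B, b.2 ∧ ∑ b ∈ B, b.2 < (i + 1) * L},
          ∀ j : Fin i, (f B j).2 = 0 ∨
            (L ≤ (f B j).2 ∧ (f B j).2 < 2 * L ∧ 1 ≤ (f B j).1 ∧ (f B j).1 + (f B j).2 - 1 ≤ n)) ∧
    {B : Finset (ℕ × ℕ) |
        (∀ b ∈ B, L ≤ b.2 ∧ 1 ≤ b.1 ∧ b.1 + b.2 - 1 ≤ n) ∧
        (B : Set (ℕ × ℕ)).Pairwise
          (fun b b' => Disjoint (Finset.Ico b.1 (b.1 + b.2)) (Finset.Ico b'.1 (b'.1 + b'.2))) ∧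
        i * L ≤ ∑ b ∈ B, b.2 ∧ ∑ b ∈ B, b.2 < (i + 1) * L}.ncard ≤ (n * L + 1) ^ i := by
  have hInj : Set.InjOn (bcFun L i) {B : Finset (ℕ × ℕ) |
      (∀ b ∈ B, L ≤ b.2 ∧ 1 ≤ b.1 ∧ b.1 + b.2 - 1 ≤ n) ∧
      (B : Set (ℕ × ℕ)).Pairwise
        (fun b b' => Disjoint (Finset.Ico b.1 (b.1 + b.2)) (Finset.Ico b'.1 (b'.1 + b'.2))) ∧
      i * L ≤ ∑ b ∈ B, b.2 ∧ ∑ b ∈ B, b.2 < (i + 1) * L} := by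
    intro B hB B' hB' hf
    simp only [Set.mem_setOf_eq] at hB hB'
    obtain ⟨h1, h2, h3, h4⟩ := hB
    obtain ⟨h1', h2', h3', h4'⟩ := hB'
    have hlen : ∀ b ∈ B, L ≤ b.2 := fun b hb => (h1 b hb).1
    have hlen' : ∀ b ∈ B', L ≤ b.2 := fun b hb => (h1' b hb).1
    exact bc_enc_inj hL hlen hlen' (bc_hfst hL h1 h2) (bc_hfst hL h1' h2')
      (bc_fun_inj hL (bc_card_enc hL hlen h4) (bc_card_enc hL hlen' h4') hf)
  have hVal : ∀ B ∈ {B : Finset (ℕ × ℕ) |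
      (∀ b ∈ B, L ≤ b.2 ∧ 1 ≤ b.1 ∧ b.1 + b.2 - 1 ≤ n) ∧
      (B : Set (ℕ × ℕ)).Pairwise
        (fun b b' => Disjoint (Finset.Ico b.1 (b.1 + b.2)) (Finset.Ico b'.1 (b'.1 + b'.2))) ∧
      i * L ≤ ∑ b ∈ B, b.2 ∧ ∑ b ∈ B, b.2 < (i + 1) * L},
      ∀ j : Fin i, (bcFun L i B j).2 = 0 ∨
        (L ≤ (bcFun L i B j).2 ∧ (bcFun L i B j).2 < 2 * L ∧ 1 ≤ (bcFun L i B j).1 ∧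
          (bcFun L i B j).1 + (bcFun L i B j).2 - 1 ≤ n) := by
    intro B hB j
    simp only [Set.mem_setOf_eq] at hB
    obtain ⟨h1, -, -, -⟩ := hB
    rcases Nat.lt_or_ge (j : ℕ) ((bcList L B).length) with h | h
    · have e : bcFun L i B j = Nat.pairEquiv.symm ((bcList L B).get ⟨j, h⟩) := dif_pos h
      obtain ⟨p, hp, hpe⟩ := bc_list_mem (List.get_mem (bcList L B) ⟨_, h⟩)
      obtain ⟨b, hb, hpb⟩ := bc_mem_enc hp
      obtain ⟨hv1, hv2, hv3⟩ := h1 b hb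
      have hv := bc_piece_valid (n := n) hL hv1 hv2 hv3 hpb
      right
      rw [e, hpe]
      exact hv
    · left
      have e : bcFun L i B j = (0, 0) := dif_neg (by omega)
      rw [e]
  refine ⟨⟨bcFun L i, hInj, hVal⟩, ?_⟩
  classical
  set S : Finset (ℕ × ℕ) :=
    insert ((0 : ℕ), (0 : ℕ)) (Finset.Icc 1 n ×ˢ Finset.Ico L (2 * L)) with hS
  have hmem : ∀ B ∈ {B : Finset (ℕ × ℕ) |
      (∀ b ∈ B, L ≤ b.2 ∧ 1 ≤ b.1 ∧ b.1 + b.2 - 1 ≤ n) ∧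
      (B : Set (ℕ × ℕ)).Pairwise
        (fun b b' => Disjoint (Finset.Ico b.1 (b.1 + b.2)) (Finset.Ico b'.1 (b'.1 + b'.2))) ∧
      i * L ≤ ∑ b ∈ B, b.2 ∧ ∑ b ∈ B, b.2 < (i + 1) * L},
      bcFun L i B ∈ (↑(Fintype.piFinset fun _ : Fin i => S) : Set (Fin i → ℕ × ℕ)) := by
    intro B hB
    rw [Set.mem_setOf_eq] at hB  -- no-op safety
    rw [Finset.mem_coe, Fintype.mem_piFinset]
    intro j
    rcases hVal B hB j with h | h
    · rcases Nat.lt_or_ge (j : ℕ) ((bcList L B).length) with hlt | hge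
      · -- value has positive second component, contradiction with h
        have e : bcFun L i B j = Nat.pairEquiv.symm ((bcList L B).get ⟨j, hlt⟩) := dif_pos hlt
        have hpos := bc_list_snd_pos hL (List.get_mem (bcList L B) ⟨_, hlt⟩)
        rw [← e] at hpos
        omega
      · have e : bcFun L i B j = (0, 0) := dif_neg (by omega)
        rw [e, hS]
        exact Finset.mem_insert_self _ _
    · obtain ⟨ha, hb, hc, hd⟩ := h
      rw [hS]
      apply Finset.mem_insert_of_mem
      rw [Finset.mem_product, Finset.mem_Icc, Finset.mem_Ico]
      exact ⟨⟨hc, by omega⟩, ha, hb⟩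
  have hfin : (↑(Fintype.piFinset fun _ : Fin i => S) : Set (Fin i → ℕ × ℕ)).Finite :=
    (Fintype.piFinset fun _ : Fin i => S).finite_toSet
  have hcard := Set.ncard_le_ncard_of_injOn (bcFun L i) hmem hInj hfin
  refine le_trans hcard ?_
  rw [Set.ncard_coe_finset, Fintype.card_piFinset]
  have hScard : S.card ≤ n * L + 1 := by
    rw [hS]
    refine le_trans (Finset.card_insert_le _ _) ?_
    rw [Finset.card_product, Nat.card_Icc, Nat.card_Ico]
    have : n + 1 - 1 = n := by omega
    rw [this]
    have : 2 * L - L = L := by omega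
    rw [this]
  simp only [Finset.prod_const, Finset.card_univ, Fintype.card_fin]
  exact Nat.pow_le_pow_left hScard i
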